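/- Consider the adversarial K-armed bandit with losses in [0,1] over T rounds. The expected regret of the EXP3 algorithm with learning rate η = √(log K / (T K)) is at most 2√(T K log K). -/

import Mathlib

/-- Softmax distribution (with rate `η`) of negated cumulative scores `B`. -/
noncomputable def softmaxNeg {K : ℕ} (η : ℝ) (B : Fin K → ℝ) (k : Fin K) : ℝ :=
  Real.exp (-η * B k) / ∑ j, Real.exp (-η * B j)

/-- Importance-weighted cumulative loss estimates of EXP3, as a function of the
history of played arms (most recent first): upon playing arm `a` at round
`h.length`, the loss estimate `ℓ_t(a) 1{a = k} / π_t[k]` is added to arm `k`'s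
cumulative estimate, where `π_t` is the softmax of the current estimates. -/
noncomputable def exp3Lhat {K : ℕ} (η : ℝ) (ℓ : ℕ → Fin K → ℝ) :
    List (Fin K) → Fin K → ℝ
  | [] => fun _ => 0
  | a :: h => fun k =>
      exp3Lhat η ℓ h k +
        if a = k then ℓ h.length k / softmaxNeg η (exp3Lhat η ℓ h) k else 0

/-- The history (most recent first) of the plays of `a` strictly before time `t`. -/
def exp3Hist {T K : ℕ} (a : Fin T → Fin K) (t : Fin T) : List (Fin K) :=
  (List.ofFn fun s : Fin t.1 => a ⟨s.1, s.2.trans t.2⟩).reverse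

/-- The probability that EXP3 plays the arm sequence `a` over the `T` rounds:
the product over rounds of the softmax sampling probability of the played arm. -/
noncomputable def exp3SeqProb {T K : ℕ} (η : ℝ) (ℓ : ℕ → Fin K → ℝ)
    (a : Fin T → Fin K) : ℝ :=
  ∏ t, softmaxNeg η (exp3Lhat η ℓ (exp3Hist a t)) (a t)

section aux
set_option linter.unusedSectionVars false
set_option linter.unnecessarySeqFocus false
variable {K : ℕ} [NeZero K] (η : ℝ) (ℓ : ℕ → Fin K → ℝ)

lemma sum_exp_pos (B : Fin K → ℝ) : 0 < ∑ j, Real.exp (-η * B j) :=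
  Finset.sum_pos (fun _ _ => Real.exp_pos _) Finset.univ_nonempty

lemma softmaxNeg_pos (B : Fin K → ℝ) (k : Fin K) : 0 < softmaxNeg η B k :=
  div_pos (Real.exp_pos _) (sum_exp_pos η B)

lemma sum_softmaxNeg (B : Fin K → ℝ) : ∑ k, softmaxNeg η B k = 1 := by
  unfold softmaxNeg
  rw [← Finset.sum_div]
  exact div_self (sum_exp_pos η B).ne'

lemma exp_neg_quad_bound {x : ℝ} (hx : 0 ≤ x) : Real.exp (-x) ≤ 1 - x + x ^ 2 / 2 := by
  have hd : ∀ y : ℝ, HasDerivAt (fun z => 1 - z + z ^ 2 / 2 - Real.exp (-z))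
      (-1 + y + Real.exp (-y)) y := by
    intro y
    have h1 : HasDerivAt (fun z : ℝ => Real.exp (-z)) (-Real.exp (-y)) y := by
      simpa [Function.comp_def] using (Real.hasDerivAt_exp (-y)).comp y (hasDerivAt_neg y)
    have h2 : HasDerivAt (fun z : ℝ => 1 - z + z ^ 2 / 2) (-1 + y) y := by
      have := ((hasDerivAt_id y).const_sub 1).add
        ((hasDerivAt_pow 2 y).div_const 2)
      simpa [mul_comm, Pi.add_def] using this
    simpa [sub_eq_add_neg, add_comm, add_assoc, Pi.add_def, Pi.neg_def] using h2.sub h1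
  have hmono : MonotoneOn (fun z => 1 - z + z ^ 2 / 2 - Real.exp (-z)) (Set.Ici 0) := by
    apply monotoneOn_of_deriv_nonneg (convex_Ici 0)
    · exact (Continuous.continuousOn (by continuity))
    · exact fun y hy => (hd y).differentiableAt.differentiableWithinAt
    · intro y hy
      rw [(hd y).deriv]
      have := Real.add_one_le_exp (-y)
      linarith
  have h0 := hmono (Set.self_mem_Ici) hx hx
  simp only [Real.exp_zero] at h0
  norm_num at h0
  linarith [h0]

/-- Realized cumulative loss along a history. -/
noncomputable def exp3Loss : List (Fin K) → ℝ
  | [] => 0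
  | a :: h => exp3Loss h + ℓ h.length a

/-- Cumulative second-moment term along a history. -/
noncomputable def exp3Quad : List (Fin K) → ℝ
  | [] => 0
  | a :: h => exp3Quad h + (ℓ h.length a) ^ 2 / softmaxNeg η (exp3Lhat η ℓ h) a

/-- Log-partition potential. -/
noncomputable def exp3Pot (h : List (Fin K)) : ℝ :=
  Real.log (∑ j, Real.exp (-η * exp3Lhat η ℓ h j))

lemma exp3Pot_step (hη : 0 ≤ η) (hℓ : ∀ t k, ℓ t k ∈ Set.Icc (0:ℝ) 1)
    (a : Fin K) (h : List (Fin K)) :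
    exp3Pot η ℓ (a :: h) ≤ exp3Pot η ℓ h - η * ℓ h.length a
      + η ^ 2 / 2 * ((ℓ h.length a) ^ 2 / softmaxNeg η (exp3Lhat η ℓ h) a) := by
  set L := exp3Lhat η ℓ h with hL
  set π : Fin K → ℝ := softmaxNeg η L with hπ
  set c := ℓ h.length a with hc
  have hπpos : ∀ k, 0 < π k := fun k => softmaxNeg_pos η L k
  have hcnn : 0 ≤ c := (hℓ h.length a).1
  set S := ∑ j, Real.exp (-η * L j) with hS
  have hSpos : 0 < S := sum_exp_pos η L
  set y : ℝ := 1 - η * c + η ^ 2 / 2 * (c ^ 2 / π a) with hy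
  have key : ∑ j, Real.exp (-η * exp3Lhat η ℓ (a :: h) j) ≤ S * y := by
    have expand : ∀ j, Real.exp (-η * exp3Lhat η ℓ (a :: h) j)
        = Real.exp (-η * L j) * Real.exp (-η * (if a = j then c / π j else 0)) := by
      intro j
      rw [← Real.exp_add]
      congr 1
      show -η * (L j + if a = j then ℓ h.length j / π j else 0) = _
      by_cases hj : a = j
      · subst hj; simp [hc]; ring
      · simp [hj]
    calc ∑ j, Real.exp (-η * exp3Lhat η ℓ (a :: h) j)
        ≤ ∑ j, Real.exp (-η * L j) *
            (1 - η * (if a = j then c / π j else 0)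
              + (η * (if a = j then c / π j else 0)) ^ 2 / 2) := by
          apply Finset.sum_le_sum
          intro j _
          rw [expand j]
          apply mul_le_mul_of_nonneg_left _ (Real.exp_pos _).le
          have hxnn : 0 ≤ η * (if a = j then c / π j else 0) := by
            by_cases hj : a = j
            · rw [if_pos hj]; exact mul_nonneg hη (div_nonneg hcnn (hπpos j).le)
            · simp [hj]
          have := exp_neg_quad_bound hxnn
          rw [neg_mul]
          linarith
      _ = S * y := by
          have hsplit : ∀ j, Real.exp (-η * L j) *
              (1 - η * (if a = j then c / π j else 0)
                + (η * (if a = j then c / π j else 0)) ^ 2 / 2)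
              = Real.exp (-η * L j)
                - η * (Real.exp (-η * L j) * (if a = j then c / π j else 0))
                + η ^ 2 / 2 * (Real.exp (-η * L j) * (if a = j then (c / π j) ^2 else 0)) := by
            intro j
            by_cases hj : a = j <;> simp [hj] <;> ring
          simp only [hsplit]
          rw [Finset.sum_add_distrib, Finset.sum_sub_distrib, ← Finset.mul_sum,
            ← Finset.mul_sum, ← hS]
          have h1 : ∑ j, Real.exp (-η * L j) * (if a = j then c / π j else 0)
              = S * c := by
            simp only [mul_ite, mul_zero]
            rw [Finset.sum_ite_eq Finset.univ a (fun j => Real.exp (-η * L j) * (c / π j))]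
            simp only [Finset.mem_univ, if_true]
            have : Real.exp (-η * L a) = π a * S := by
              rw [hπ, softmaxNeg, ← hS]; field_simp
            rw [this]
            field_simp [(hπpos a).ne']
          have h2 : ∑ j, Real.exp (-η * L j) * (if a = j then (c / π j)^2 else 0)
              = S * (c ^ 2 / π a) := by
            simp only [mul_ite, mul_zero]
            rw [Finset.sum_ite_eq Finset.univ a (fun j => Real.exp (-η * L j) * (c / π j)^2)]
            simp only [Finset.mem_univ, if_true]
            have : Real.exp (-η * L a) = π a * S := by
              rw [hπ, softmaxNeg, ← hS]; field_simp
            rw [this, div_pow]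
            field_simp [(hπpos a).ne']
          rw [h1, h2, hy]
          ring
  have hApos : 0 < ∑ j, Real.exp (-η * exp3Lhat η ℓ (a :: h) j) := sum_exp_pos η _
  have hypos : 0 < y := by
    by_contra hneg
    push_neg at hneg
    nlinarith
  calc exp3Pot η ℓ (a :: h) ≤ Real.log (S * y) := Real.log_le_log hApos key
    _ = Real.log S + Real.log y := Real.log_mul hSpos.ne' hypos.ne'
    _ ≤ Real.log S + (y - 1) := by linarith [Real.log_le_sub_one_of_pos hypos]
    _ = exp3Pot η ℓ h - η * c + η ^ 2 / 2 * (c ^ 2 / π a) := by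
        rw [exp3Pot, ← hS, hy]; ring

lemma exp3_pathwise (hη : 0 ≤ η) (hℓ : ∀ t k, ℓ t k ∈ Set.Icc (0:ℝ) 1)
    (h : List (Fin K)) (k : Fin K) :
    η * exp3Loss ℓ h ≤ Real.log K + η * exp3Lhat η ℓ h k
      + η ^ 2 / 2 * exp3Quad η ℓ h := by
  have hpot : exp3Pot η ℓ h ≤ Real.log K - η * exp3Loss ℓ h
      + η ^ 2 / 2 * exp3Quad η ℓ h := by
    induction h with
    | nil =>
      simp [exp3Pot, exp3Loss, exp3Quad, exp3Lhat]
    | cons a h ih =>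
      have := exp3Pot_step η ℓ hη hℓ a h
      show exp3Pot η ℓ (a :: h) ≤ _
      rw [show exp3Loss ℓ (a :: h) = exp3Loss ℓ h + ℓ h.length a from rfl,
        show exp3Quad η ℓ (a :: h) = exp3Quad η ℓ h
          + (ℓ h.length a) ^ 2 / softmaxNeg η (exp3Lhat η ℓ h) a from rfl]
      have h2 : 0 ≤ η ^ 2 / 2 * ((ℓ h.length a) ^ 2 / softmaxNeg η (exp3Lhat η ℓ h) a) := by
        have := softmaxNeg_pos η (exp3Lhat η ℓ h) a
        positivity
      linarith
  have hlow : -η * exp3Lhat η ℓ h k ≤ exp3Pot η ℓ h := by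
    rw [exp3Pot]
    calc -η * exp3Lhat η ℓ h k = Real.log (Real.exp (-η * exp3Lhat η ℓ h k)) := by
          rw [Real.log_exp]
      _ ≤ _ := by
          apply Real.log_le_log (Real.exp_pos _)
          exact Finset.single_le_sum (f := fun j => Real.exp (-η * exp3Lhat η ℓ h j))
            (fun j _ => (Real.exp_pos _).le) (Finset.mem_univ k)
  linarith

/-- The full history of a play sequence. -/
def exp3HistF {n : ℕ} (a : Fin n → Fin K) : List (Fin K) := (List.ofFn a).reverse

lemma exp3HistF_length {n : ℕ} (a : Fin n → Fin K) : (exp3HistF a).length = n := by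
  simp [exp3HistF]

lemma snoc_lt_eq {n : ℕ} (a : Fin n → Fin K) (b : Fin K) (i : Fin (n+1)) (h : i.1 < n) :
    (Fin.snoc a b : Fin (n+1) → Fin K) i = a ⟨i.1, h⟩ := by
  simp [Fin.snoc, h]
  rfl

lemma exp3HistF_snoc {n : ℕ} (a : Fin n → Fin K) (b : Fin K) :
    exp3HistF (Fin.snoc a b) = b :: exp3HistF a := by
  unfold exp3HistF
  rw [List.ofFn_succ']
  simp [List.concat_eq_append]

lemma exp3Hist_castSucc {n : ℕ} (a : Fin n → Fin K) (b : Fin K) (t : Fin n) :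
    exp3Hist (Fin.snoc a b) t.castSucc = exp3Hist a t := by
  unfold exp3Hist
  congr 1
  exact congrArg List.ofFn (funext fun s => snoc_lt_eq a b _ (s.2.trans t.2))

lemma exp3Hist_last {n : ℕ} (a : Fin n → Fin K) (b : Fin K) :
    exp3Hist (Fin.snoc a b) (Fin.last n) = exp3HistF a := by
  unfold exp3Hist exp3HistF
  congr 1
  exact congrArg List.ofFn (funext fun s => snoc_lt_eq a b _ s.2)

/-- Probability weight of a history. -/
noncomputable def exp3W : List (Fin K) → ℝ
  | [] => 1
  | a :: h => exp3W h * softmaxNeg η (exp3Lhat η ℓ h) a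

lemma exp3W_nonneg (h : List (Fin K)) : 0 ≤ exp3W η ℓ h := by
  induction h with
  | nil => norm_num [exp3W]
  | cons a h ih => exact mul_nonneg ih (softmaxNeg_pos η _ a).le

lemma exp3SeqProb_eq_W {n : ℕ} (a : Fin n → Fin K) :
    exp3SeqProb η ℓ a = exp3W η ℓ (exp3HistF a) := by
  induction n with
  | zero => simp [exp3SeqProb, exp3HistF, exp3W]
  | succ n ih =>
    rw [← Fin.snoc_init_self a]
    rw [exp3SeqProb, Fin.prod_univ_castSucc]
    simp only [exp3Hist_castSucc, exp3Hist_last, Fin.snoc_castSucc, Fin.snoc_last]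
    rw [exp3HistF_snoc, exp3W, ← ih]
    rfl

lemma sum_fn_snoc {n : ℕ} (f : (Fin (n+1) → Fin K) → ℝ) :
    ∑ a : Fin (n+1) → Fin K, f a = ∑ a : Fin n → Fin K, ∑ b : Fin K, f (Fin.snoc a b) := by
  rw [← (Fin.snocEquiv (fun _ => Fin K)).sum_comp f, Fintype.sum_prod_type]
  rw [Finset.sum_comm]
  rfl

lemma exp3W_sum {n : ℕ} : ∑ a : Fin n → Fin K, exp3W η ℓ (exp3HistF a) = 1 := by
  induction n with
  | zero => simp [exp3HistF, exp3W]
  | succ n ih =>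
    rw [sum_fn_snoc]
    simp only [exp3HistF_snoc, exp3W]
    rw [← ih]
    apply Finset.sum_congr rfl
    intro a _
    rw [← Finset.mul_sum, sum_softmaxNeg, mul_one]

lemma exp3W_Lhat {n : ℕ} (k : Fin K) :
    ∑ a : Fin n → Fin K, exp3W η ℓ (exp3HistF a) * exp3Lhat η ℓ (exp3HistF a) k
      = ∑ s ∈ Finset.range n, ℓ s k := by
  induction n with
  | zero => simp [exp3HistF, exp3W, exp3Lhat]
  | succ n ih =>
    rw [sum_fn_snoc, Finset.sum_range_succ, ← ih]
    have step : ∀ a : Fin n → Fin K,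
        ∑ b : Fin K, exp3W η ℓ (exp3HistF (Fin.snoc a b)) * exp3Lhat η ℓ (exp3HistF (Fin.snoc a b)) k
        = exp3W η ℓ (exp3HistF a) * exp3Lhat η ℓ (exp3HistF a) k
          + exp3W η ℓ (exp3HistF a) * ℓ n k := by
      intro a
      have hπ : ∀ b, 0 < softmaxNeg η (exp3Lhat η ℓ (exp3HistF a)) b :=
        fun b => softmaxNeg_pos η _ b
      have hterm : ∀ b : Fin K,
          exp3W η ℓ (exp3HistF (Fin.snoc a b)) * exp3Lhat η ℓ (exp3HistF (Fin.snoc a b)) k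
          = exp3W η ℓ (exp3HistF a) * exp3Lhat η ℓ (exp3HistF a) k *
              softmaxNeg η (exp3Lhat η ℓ (exp3HistF a)) b
            + (if b = k then exp3W η ℓ (exp3HistF a) *
                (softmaxNeg η (exp3Lhat η ℓ (exp3HistF a)) k *
                  (ℓ n k / softmaxNeg η (exp3Lhat η ℓ (exp3HistF a)) k)) else 0) := by
        intro b
        rw [exp3HistF_snoc]
        show exp3W η ℓ (exp3HistF a) * softmaxNeg η (exp3Lhat η ℓ (exp3HistF a)) b *
            (exp3Lhat η ℓ (exp3HistF a) k
              + if b = k then ℓ (exp3HistF a).length k /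
                  softmaxNeg η (exp3Lhat η ℓ (exp3HistF a)) k else 0) = _
        rw [exp3HistF_length]
        by_cases hb : b = k
        · subst hb; simp; ring
        · simp [hb]; ring
      simp only [hterm]
      rw [Finset.sum_add_distrib, ← Finset.mul_sum, sum_softmaxNeg, mul_one,
        Finset.sum_ite_eq' Finset.univ k]
      simp only [Finset.mem_univ, if_true]
      rw [mul_div_cancel₀ _ (hπ k).ne']
    simp only [step]
    rw [Finset.sum_add_distrib, ← Finset.sum_mul, exp3W_sum, one_mul]

lemma exp3W_Quad {n : ℕ} :
    ∑ a : Fin n → Fin K, exp3W η ℓ (exp3HistF a) * exp3Quad η ℓ (exp3HistF a)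
      = ∑ s ∈ Finset.range n, ∑ j : Fin K, (ℓ s j) ^ 2 := by
  induction n with
  | zero => simp [exp3HistF, exp3W, exp3Quad]
  | succ n ih =>
    rw [sum_fn_snoc, Finset.sum_range_succ, ← ih]
    have step : ∀ a : Fin n → Fin K,
        ∑ b : Fin K, exp3W η ℓ (exp3HistF (Fin.snoc a b)) * exp3Quad η ℓ (exp3HistF (Fin.snoc a b))
        = exp3W η ℓ (exp3HistF a) * exp3Quad η ℓ (exp3HistF a)
          + exp3W η ℓ (exp3HistF a) * ∑ j : Fin K, (ℓ n j) ^ 2 := by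
      intro a
      have hπ : ∀ b, 0 < softmaxNeg η (exp3Lhat η ℓ (exp3HistF a)) b :=
        fun b => softmaxNeg_pos η _ b
      have hterm : ∀ b : Fin K,
          exp3W η ℓ (exp3HistF (Fin.snoc a b)) * exp3Quad η ℓ (exp3HistF (Fin.snoc a b))
          = exp3W η ℓ (exp3HistF a) * exp3Quad η ℓ (exp3HistF a) *
              softmaxNeg η (exp3Lhat η ℓ (exp3HistF a)) b
            + exp3W η ℓ (exp3HistF a) * (ℓ n b) ^ 2 := by
        intro b
        rw [exp3HistF_snoc]
        show exp3W η ℓ (exp3HistF a) * softmaxNeg η (exp3Lhat η ℓ (exp3HistF a)) b *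
            (exp3Quad η ℓ (exp3HistF a)
              + (ℓ (exp3HistF a).length b) ^ 2 /
                  softmaxNeg η (exp3Lhat η ℓ (exp3HistF a)) b) = _
        rw [exp3HistF_length]
        field_simp [(hπ b).ne']
      simp only [hterm]
      rw [Finset.sum_add_distrib, ← Finset.mul_sum, sum_softmaxNeg, mul_one, ← Finset.mul_sum]
    simp only [step]
    rw [Finset.sum_add_distrib, ← Finset.sum_mul, exp3W_sum, one_mul]

lemma exp3Loss_hist {n : ℕ} (a : Fin n → Fin K) :
    exp3Loss ℓ (exp3HistF a) = ∑ t : Fin n, ℓ t.1 (a t) := by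
  induction n with
  | zero => simp [exp3HistF, exp3Loss]
  | succ n ih =>
    rw [← Fin.snoc_init_self a, exp3HistF_snoc, Fin.sum_univ_castSucc]
    simp only [Fin.snoc_castSucc, Fin.snoc_last]
    show exp3Loss ℓ (exp3HistF (Fin.init a)) + ℓ (exp3HistF (Fin.init a)).length (a (Fin.last n)) = _
    rw [exp3HistF_length, ih]
    rfl

end aux

/-- Expected regret of EXP3 with learning rate `η = √(log K / (T K))` on an
adversarial `K`-armed bandit with losses in `[0,1]` over `T` rounds is at most
`2 √(T K log K)`. -/
theorem exp3_expected_regret (K T : ℕ) [NeZero K] (hT : 0 < T)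
    (ℓ : ℕ → Fin K → ℝ) (hℓ : ∀ t k, ℓ t k ∈ Set.Icc (0 : ℝ) 1) :
    (∑ a : Fin T → Fin K,
        exp3SeqProb (Real.sqrt (Real.log K / (T * K))) ℓ a * ∑ t, ℓ t.1 (a t))
      - Finset.univ.inf' Finset.univ_nonempty (fun k : Fin K => ∑ t : Fin T, ℓ t.1 k)
    ≤ 2 * Real.sqrt (T * K * Real.log K) := by
  set η := Real.sqrt (Real.log K / (T * K)) with hηdef
  have hηnn : 0 ≤ η := Real.sqrt_nonneg _
  obtain ⟨k₀, -, hk₀⟩ := Finset.exists_mem_eq_inf' (Finset.univ_nonempty)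
    (fun k : Fin K => ∑ t : Fin T, ℓ t.1 k)
  rw [hk₀]
  have hLsum : ∀ a : Fin T → Fin K,
      exp3SeqProb η ℓ a * ∑ t, ℓ t.1 (a t)
      = exp3W η ℓ (exp3HistF a) * exp3Loss ℓ (exp3HistF a) := by
    intro a
    rw [exp3SeqProb_eq_W, exp3Loss_hist]
  rw [Finset.sum_congr rfl (fun a _ => hLsum a)]
  set E := ∑ a : Fin T → Fin K, exp3W η ℓ (exp3HistF a) * exp3Loss ℓ (exp3HistF a) with hE
  set M := ∑ t : Fin T, ℓ t.1 k₀ with hM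
  -- expectation bound
  have hQbound : ∑ s ∈ Finset.range T, ∑ j : Fin K, (ℓ s j) ^ 2 ≤ (T : ℝ) * K := by
    calc ∑ s ∈ Finset.range T, ∑ j : Fin K, (ℓ s j) ^ 2
        ≤ ∑ s ∈ Finset.range T, ∑ j : Fin K, (1 : ℝ) := by
          apply Finset.sum_le_sum
          intro s _
          apply Finset.sum_le_sum
          intro j _
          nlinarith [(hℓ s j).1, (hℓ s j).2]
      _ = (T : ℝ) * K := by simp [mul_comm]
  have hEbound : η * E ≤ Real.log K + η * M + η ^ 2 / 2 * ((T : ℝ) * K) := by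
    have hstep := Finset.sum_le_sum (s := (Finset.univ : Finset (Fin T → Fin K)))
      (f := fun a : Fin T → Fin K => exp3W η ℓ (exp3HistF a) * (η * exp3Loss ℓ (exp3HistF a)))
      (g := fun a : Fin T → Fin K => exp3W η ℓ (exp3HistF a) *
        (Real.log K + η * exp3Lhat η ℓ (exp3HistF a) k₀ + η ^ 2 / 2 * exp3Quad η ℓ (exp3HistF a)))
      (fun a _ => mul_le_mul_of_nonneg_left
        (exp3_pathwise η ℓ hηnn hℓ (exp3HistF a) k₀) (exp3W_nonneg η ℓ _))
    have lhs_eq : ∑ a : Fin T → Fin K,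
        exp3W η ℓ (exp3HistF a) * (η * exp3Loss ℓ (exp3HistF a)) = η * E := by
      rw [hE, Finset.mul_sum]
      exact Finset.sum_congr rfl (fun a _ => by ring)
    have rhs_eq : ∑ a : Fin T → Fin K, exp3W η ℓ (exp3HistF a) *
        (Real.log K + η * exp3Lhat η ℓ (exp3HistF a) k₀ + η ^ 2 / 2 * exp3Quad η ℓ (exp3HistF a))
        = Real.log K + η * (∑ s ∈ Finset.range T, ℓ s k₀)
          + η ^ 2 / 2 * (∑ s ∈ Finset.range T, ∑ j : Fin K, (ℓ s j) ^ 2) := by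
      have expand : ∀ a : Fin T → Fin K, exp3W η ℓ (exp3HistF a) *
          (Real.log K + η * exp3Lhat η ℓ (exp3HistF a) k₀ + η ^ 2 / 2 * exp3Quad η ℓ (exp3HistF a))
          = Real.log K * exp3W η ℓ (exp3HistF a)
            + η * (exp3W η ℓ (exp3HistF a) * exp3Lhat η ℓ (exp3HistF a) k₀)
            + η ^ 2 / 2 * (exp3W η ℓ (exp3HistF a) * exp3Quad η ℓ (exp3HistF a)) := fun a => by ring
      rw [Finset.sum_congr rfl (fun a _ => expand a), Finset.sum_add_distrib,
        Finset.sum_add_distrib, ← Finset.mul_sum, ← Finset.mul_sum, ← Finset.mul_sum,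
        exp3W_sum, exp3W_Lhat, exp3W_Quad, mul_one]
    rw [lhs_eq, rhs_eq] at hstep
    have hM_eq : ∑ s ∈ Finset.range T, ℓ s k₀ = M := by
      rw [hM, ← Fin.sum_univ_eq_sum_range (fun s => ℓ s k₀) T]
    rw [hM_eq] at hstep
    have : η ^ 2 / 2 * (∑ s ∈ Finset.range T, ∑ j : Fin K, (ℓ s j) ^ 2)
        ≤ η ^ 2 / 2 * ((T : ℝ) * K) := by
      apply mul_le_mul_of_nonneg_left hQbound
      positivity
    linarith
  by_cases hK1 : K = 1
  · -- trivial case: only one arm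
    haveI hsub : Subsingleton (Fin K) := by subst hK1; infer_instance
    have hall : ∀ a : Fin T → Fin K, exp3Loss ℓ (exp3HistF a) = M := by
      intro a
      rw [exp3Loss_hist, hM]
      exact Finset.sum_congr rfl (fun t _ => by rw [Subsingleton.elim (a t) k₀])
    have : E = M := by
      rw [hE, Finset.sum_congr rfl (fun a _ => by rw [hall a]), ← Finset.sum_mul,
        exp3W_sum, one_mul]
    rw [this]
    simp only [sub_self]
    positivity
  · -- main case : K ≥ 2
    have hK2 : (1 : ℝ) < K := by
      have h0 : K ≠ 0 := NeZero.ne K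
      have : 1 < K := by omega
      exact_mod_cast this
    have hlogK : 0 < Real.log K := Real.log_pos hK2
    have hu : (0 : ℝ) < (T : ℝ) * K := by
      have : 0 < K := Nat.pos_of_ne_zero (NeZero.ne K)
      positivity
    have hηpos : 0 < η := Real.sqrt_pos.mpr (div_pos hlogK hu)
    set R := Real.sqrt ((T : ℝ) * K * Real.log K) with hR
    have hRnn : 0 ≤ R := Real.sqrt_nonneg _
    have hRR : R * R = (T : ℝ) * K * Real.log K :=
      Real.mul_self_sqrt (mul_nonneg hu.le hlogK.le)
    have hηR : η * R = Real.log K := by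
      rw [hηdef, hR, ← Real.sqrt_mul (div_nonneg hlogK.le hu.le)]
      rw [show Real.log K / ((T : ℝ) * K) * ((T : ℝ) * K * Real.log K)
          = (Real.log K) ^ 2 by field_simp]
      exact Real.sqrt_sq hlogK.le
    have hηTK : η * ((T : ℝ) * K) = R := by
      have hcancel : (η * ((T : ℝ) * K)) * Real.log K = R * Real.log K := by
        calc (η * ((T : ℝ) * K)) * Real.log K = η * ((T : ℝ) * K * Real.log K) := by ring
          _ = η * (R * R) := by rw [hRR]
          _ = (η * R) * R := by ring
          _ = Real.log K * R := by rw [hηR]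
          _ = R * Real.log K := by ring
      exact mul_right_cancel₀ hlogK.ne' hcancel
    -- conclude
    have key : η * (E - M) ≤ η * (2 * R) := by
      have h1 : η ^ 2 / 2 * ((T : ℝ) * K) = η / 2 * R := by
        rw [← hηTK]; ring
      rw [← hηR] at hEbound
      nlinarith [hEbound, mul_nonneg hηnn hRnn]
    have := le_of_mul_le_mul_left key hηpos
    linarith
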